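/- arXiv:1910.08729 — 7 statements merged into one kernel-verified Lean document; each statement's English description precedes it below -/
import Mathlib

section
/- Let A be a real 2×2 matrix and b ∈ ℝ² with a12 ≠ 0, det A ≠ 0 and a12 b2 − a22 b1 ≠ 0, and let (x(t), y(t))ᵀ be the solution of ż = Az + b with initial value (0, −b1/a12)ᵀ. If there exists t0 ≠ 0 with x(t0) = 0 and y(t0) = −b1/a12, then the eigenvalues of A are purely imaginary (i.e., tr A = 0 and det A > 0), so the unique equilibrium is a center. -/
open Set

private lemma aux_eq_of_deriv_zero (x w : ℝ → ℝ)
    (hx : ∀ t, HasDerivAt x (w t) t) {a b : ℝ} (hab : a < b)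
    (hw : ∀ s ∈ Set.Ioo a b, w s = 0) : x b = x a := by
  have hcont : ContinuousOn x (Set.Icc a b) :=
    (Differentiable.continuous fun t => (hx t).differentiableAt).continuousOn
  obtain ⟨c, hc, hceq⟩ := exists_hasDerivAt_eq_slope x w hab hcont (fun s _ => hx s)
  rw [hw c hc] at hceq
  have hba : b - a ≠ 0 := by linarith [hab]
  field_simp at hceq
  linarith

private lemma aux_deriv_zero_of_endpoints_eq (f f' : ℝ → ℝ)
    (hf : ∀ t, HasDerivAt f (f' t) t) (hpos : ∀ t, 0 ≤ f' t)
    {a b : ℝ} (_hab : a < b) (heq : f a = f b) :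
    ∀ s ∈ Set.Ioo a b, f' s = 0 := by
  have hmono : Monotone f := by
    apply monotone_of_deriv_nonneg (fun t => (hf t).differentiableAt)
    intro t; rw [(hf t).deriv]; exact hpos t
  intro s hs
  have hconst : ∀ u ∈ Set.Icc a b, f u = f a := fun u hu =>
    le_antisymm (heq ▸ hmono hu.2) (hmono hu.1)
  have hev : (fun _ : ℝ => f a) =ᶠ[nhds s] f := by
    filter_upwards [Ioo_mem_nhds hs.1 hs.2] with u hu
    exact (hconst u (Set.Ioo_subset_Icc_self hu)).symm
  exact ((hf s).congr_of_eventuallyEq hev).unique (hasDerivAt_const s (f a))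

/-- If the solution of `ż = Az + b` starting at the tangency point `(0, -b1/a12)` with the
y-axis returns to the tangency point at some time `t0 ≠ 0`, then the eigenvalues of `A` are
purely imaginary: `tr A = 0` and `det A > 0` (the equilibrium is a center). -/
theorem stmt_1 (a11 a12 a21 a22 b1 b2 : ℝ) (h12 : a12 ≠ 0)
    (hdet : a11 * a22 - a12 * a21 ≠ 0) (hB : a12 * b2 - a22 * b1 ≠ 0)
    (x y : ℝ → ℝ)
    (hx : ∀ t : ℝ, HasDerivAt x (a11 * x t + a12 * y t + b1) t)
    (hy : ∀ t : ℝ, HasDerivAt y (a21 * x t + a22 * y t + b2) t)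
    (hx0 : x 0 = 0) (hy0 : y 0 = -b1 / a12)
    (hret : ∃ t0 : ℝ, t0 ≠ 0 ∧ x t0 = 0 ∧ y t0 = -b1 / a12) :
    a11 + a22 = 0 ∧ 0 < a11 * a22 - a12 * a21 := by
  obtain ⟨t0, ht0, hxt0, hyt0⟩ := hret
  set D := a11 * a22 - a12 * a21 with hDdef
  set B := a12 * b2 - a22 * b1 with hBdef
  have hw0 : a11 * x 0 + a12 * y 0 + b1 = 0 := by
    rw [hx0, hy0]; field_simp; ring
  have hwt0 : a11 * x t0 + a12 * y t0 + b1 = 0 := by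
    rw [hxt0, hyt0]; field_simp; ring
  have hw : ∀ t, HasDerivAt (fun t => a11 * x t + a12 * y t + b1)
      ((a11 + a22) * (a11 * x t + a12 * y t + b1) - D * x t + B) t := by
    intro t
    have h := (((hx t).const_mul a11).add ((hy t).const_mul a12)).add_const b1
    refine h.congr_deriv (Eq.symm ?_)
    rw [hDdef, hBdef]; ring
  set a := min 0 t0 with hadef
  set b := max 0 t0 with hbdef
  have hab : a < b := min_lt_max.mpr (Ne.symm ht0)
  have hends : (x a = 0 ∧ a11 * x a + a12 * y a + b1 = 0) ∧
      (x b = 0 ∧ a11 * x b + a12 * y b + b1 = 0) := by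
    rcases le_total 0 t0 with h | h
    · rw [hadef, hbdef, min_eq_left h, max_eq_right h]
      exact ⟨⟨hx0, hw0⟩, hxt0, hwt0⟩
    · rw [hadef, hbdef, min_eq_right h, max_eq_left h]
      exact ⟨⟨hxt0, hwt0⟩, hx0, hw0⟩
  obtain ⟨⟨hxa, hwa⟩, hxb, hwb⟩ := hends
  have hs0 : (a + b) / 2 ∈ Set.Ioo a b := ⟨by linarith, by linarith⟩
  -- common final contradiction
  have hfinal : (∀ s ∈ Set.Ioo a b, a11 * x s + a12 * y s + b1 = 0) →
      D * x ((a + b) / 2) = B → False := by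
    intro hz hmid
    have hxs0 : x ((a + b) / 2) = x a := by
      apply aux_eq_of_deriv_zero x (fun t => a11 * x t + a12 * y t + b1) hx hs0.1
      intro s hs
      exact hz s ⟨hs.1, hs.2.trans hs0.2⟩
    rw [hxs0, hxa, mul_zero] at hmid
    exact hB (hBdef ▸ hmid.symm)
  -- Step 1: trace is zero
  have htr : a11 + a22 = 0 := by
    by_contra hT
    have hE : ∀ t, HasDerivAt
        (fun t => (a11 + a22) * (D * (D * x t - B) ^ 2
          + D ^ 2 * (a11 * x t + a12 * y t + b1) ^ 2))
        (2 * (a11 + a22) ^ 2 * D ^ 2 * (a11 * x t + a12 * y t + b1) ^ 2) t := by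
      intro t
      have h1 := (((hx t).const_mul D).sub_const B).pow 2
      have h2 := (hw t).pow 2
      have h := ((h1.const_mul D).add (h2.const_mul (D ^ 2))).const_mul (a11 + a22)
      refine h.congr_deriv (Eq.symm ?_)
      ring
    have hEab : (fun t => (a11 + a22) * (D * (D * x t - B) ^ 2
          + D ^ 2 * (a11 * x t + a12 * y t + b1) ^ 2)) a
        = (fun t => (a11 + a22) * (D * (D * x t - B) ^ 2
          + D ^ 2 * (a11 * x t + a12 * y t + b1) ^ 2)) b := by
      simp only
      rw [hwa, hwb, hxa, hxb]
    have hzero := aux_deriv_zero_of_endpoints_eq _ _ hE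
      (fun t => by positivity) hab hEab
    have hwz : ∀ s ∈ Set.Ioo a b, a11 * x s + a12 * y s + b1 = 0 := by
      intro s hs
      have h := hzero s hs
      have hT2 : (2 * (a11 + a22) ^ 2 * D ^ 2 : ℝ) ≠ 0 :=
        mul_ne_zero (mul_ne_zero two_ne_zero (pow_ne_zero 2 hT)) (pow_ne_zero 2 hdet)
      have hsq : (a11 * x s + a12 * y s + b1) ^ 2 = 0 :=
        (mul_eq_zero.mp h).resolve_left hT2
      exact (pow_eq_zero_iff two_ne_zero).mp hsq
    apply hfinal hwz
    set s0 := (a + b) / 2 with hs0def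
    have hev : (fun _ : ℝ => (0:ℝ)) =ᶠ[nhds s0] (fun t => a11 * x t + a12 * y t + b1) := by
      filter_upwards [Ioo_mem_nhds hs0.1 hs0.2] with u hu
      exact (hwz u hu).symm
    have hder := ((hw s0).congr_of_eventuallyEq hev).unique (hasDerivAt_const s0 (0:ℝ))
    have hws0 := hwz s0 hs0
    rw [hws0] at hder
    linarith
  refine ⟨htr, ?_⟩
  -- Step 2: determinant is positive
  by_contra hD'
  have hDneg : D < 0 := lt_of_le_of_ne (not_lt.mp hD') hdet
  have hG : ∀ t, HasDerivAt
      (fun t => 2 * D * (D * x t - B) * (a11 * x t + a12 * y t + b1))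
      (2 * D ^ 2 * (a11 * x t + a12 * y t + b1) ^ 2 - 2 * D * (D * x t - B) ^ 2) t := by
    intro t
    have h := ((((hx t).const_mul D).sub_const B).const_mul (2 * D)).mul (hw t)
    refine h.congr_deriv (Eq.symm ?_)
    linear_combination (-(2 * D * (D * x t - B) * (a11 * x t + a12 * y t + b1))) * htr
  have hGab : (fun t => 2 * D * (D * x t - B) * (a11 * x t + a12 * y t + b1)) a
      = (fun t => 2 * D * (D * x t - B) * (a11 * x t + a12 * y t + b1)) b := by
    simp only
    rw [hwa, hwb, mul_zero, mul_zero]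
  have hpos : ∀ t, (0:ℝ) ≤ 2 * D ^ 2 * (a11 * x t + a12 * y t + b1) ^ 2
      - 2 * D * (D * x t - B) ^ 2 := by
    intro t
    have h1 : (0:ℝ) ≤ 2 * D ^ 2 * (a11 * x t + a12 * y t + b1) ^ 2 := by positivity
    have h2 : (0:ℝ) ≤ (-(2 * D)) * (D * x t - B) ^ 2 :=
      mul_nonneg (by linarith) (sq_nonneg _)
    linarith
  have hzero := aux_deriv_zero_of_endpoints_eq _ _ hG hpos hab hGab
  have hboth : ∀ s ∈ Set.Ioo a b,
      (a11 * x s + a12 * y s + b1 = 0) ∧ D * x s = B := by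
    intro s hs
    have h := hzero s hs
    have h1 : (0:ℝ) ≤ 2 * D ^ 2 * (a11 * x s + a12 * y s + b1) ^ 2 := by positivity
    have h2 : (0:ℝ) ≤ (-(2 * D)) * (D * x s - B) ^ 2 :=
      mul_nonneg (by linarith) (sq_nonneg _)
    have e1 : 2 * D ^ 2 * (a11 * x s + a12 * y s + b1) ^ 2 = 0 := by linarith
    have e2 : (-(2 * D)) * (D * x s - B) ^ 2 = 0 := by linarith
    constructor
    · have hne : (2 * D ^ 2 : ℝ) ≠ 0 := mul_ne_zero two_ne_zero (pow_ne_zero 2 hdet)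
      exact (pow_eq_zero_iff two_ne_zero).mp ((mul_eq_zero.mp e1).resolve_left hne)
    · have hne : (-(2 * D) : ℝ) ≠ 0 := by linarith
      have := (pow_eq_zero_iff two_ne_zero).mp ((mul_eq_zero.mp e2).resolve_left hne)
      linarith
  exact hfinal (fun s hs => (hboth s hs).1) ((hboth _ hs0).2)
end

section
/- Let A be a real 2×2 matrix and b ∈ ℝ² with a12 ≠ 0, det A ≠ 0 and a12 b2 − a22 b1 ≠ 0, and let (x(t), y(t))ᵀ be the solution of ż = Az + b with initial value (0, −b1/a12)ᵀ. If there exists t0 > 0 with x(t0) = 0 and y(t0) ≠ −b1/a12, then A has complex (non-real) eigenvalues with positive real part, i.e., (tr A)² < 4 det A and tr A > 0, so the equilibrium is an unstable focus. -/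
lemma sol_real (τ δ lam mu : ℝ) (u v : ℝ → ℝ)
    (hu : ∀ t, HasDerivAt u (v t) t)
    (hv : ∀ t, HasDerivAt v (τ * v t - δ * u t) t)
    (hsum : lam + mu = τ) (hprod : lam * mu = δ) (t : ℝ) :
    v t - lam * u t = (v 0 - lam * u 0) * Real.exp (mu * t) := by
  set g : ℝ → ℝ := fun t => (v t - lam * u t) * Real.exp (-(mu * t)) with hg
  have hd : ∀ s : ℝ, HasDerivAt g 0 s := by
    intro s
    have h1 : HasDerivAt (fun t => v t - lam * u t) (τ * v s - δ * u s - lam * v s) s :=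
      (hv s).sub ((hu s).const_mul lam)
    have h2 : HasDerivAt (fun t : ℝ => Real.exp (-(mu * t)))
        (Real.exp (-(mu * s)) * -(mu * 1)) s := (((hasDerivAt_id s).const_mul mu).neg).exp
    have h3 := h1.mul h2
    refine h3.congr_deriv (Eq.symm ?_)
    linear_combination (Real.exp (-(mu * s)) * v s) * hsum - (Real.exp (-(mu * s)) * u s) * hprod
  have hconst := is_const_of_deriv_eq_zero (fun s => (hd s).differentiableAt)
      (fun s => (hd s).deriv) t 0
  have h0 : (v t - lam * u t) * Real.exp (-(mu * t)) = v 0 - lam * u 0 := by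
    simpa [hg] using hconst
  rw [← h0, mul_assoc, ← Real.exp_add]
  simp

open Complex in
lemma sol_complex (τ δ : ℝ) (lam mu : ℂ) (u v : ℝ → ℝ)
    (hu : ∀ t, HasDerivAt u (v t) t)
    (hv : ∀ t, HasDerivAt v (τ * v t - δ * u t) t)
    (hsum : lam + mu = (τ : ℂ)) (hprod : lam * mu = (δ : ℂ)) (t : ℝ) :
    (v t : ℂ) - lam * u t = ((v 0 : ℂ) - lam * u 0) * Complex.exp (mu * t) := by
  set g : ℝ → ℂ := fun t => ((v t : ℂ) - lam * u t) * Complex.exp (-(mu * t)) with hg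
  have hd : ∀ s : ℝ, HasDerivAt g 0 s := by
    intro s
    have h1 : HasDerivAt (fun t : ℝ => (v t : ℂ) - lam * u t)
        (((τ * v s - δ * u s : ℝ) : ℂ) - lam * (v s : ℂ)) s :=
      (hv s).ofReal_comp.sub (((hu s).ofReal_comp).const_mul lam)
    have h2' : HasDerivAt (fun z : ℂ => Complex.exp (-(mu * z)))
        (Complex.exp (-(mu * (s : ℂ))) * -(mu * 1)) (s : ℂ) :=
      (((hasDerivAt_id (s : ℂ)).const_mul mu).neg).cexp
    have h2 : HasDerivAt (fun t : ℝ => Complex.exp (-(mu * (t : ℂ))))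
        (Complex.exp (-(mu * (s : ℂ))) * -(mu * 1)) s := h2'.comp_ofReal
    have h3 := h1.mul h2
    refine h3.congr_deriv (Eq.symm ?_)
    push_cast
    linear_combination (Complex.exp (-(mu * (s:ℂ))) * (v s : ℂ)) * hsum
      - (Complex.exp (-(mu * (s:ℂ))) * (u s : ℂ)) * hprod
  have hconst := is_const_of_deriv_eq_zero (fun s => (hd s).differentiableAt)
      (fun s => (hd s).deriv) t 0
  have h0 : ((v t : ℂ) - lam * u t) * Complex.exp (-(mu * t)) = (v 0 : ℂ) - lam * u 0 := by
    simpa [hg] using hconst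
  rw [← h0, mul_assoc, ← Complex.exp_add]
  simp

lemma no_real_distinct (lam mu t0 : ℝ) (hlt : lam < mu) (hne : lam * mu ≠ 0) (ht0 : 0 < t0)
    (h : lam * (Real.exp (mu * t0) - 1) = mu * (Real.exp (lam * t0) - 1)) : False := by
  set F : ℝ → ℝ := fun t => lam * Real.exp (mu * t) - mu * Real.exp (lam * t) with hF
  have hd : ∀ s : ℝ, HasDerivAt F (lam * mu * (Real.exp (mu * s) - Real.exp (lam * s))) s := by
    intro s
    have h1 : HasDerivAt (fun t : ℝ => Real.exp (mu * t)) (Real.exp (mu * s) * (mu * 1)) s :=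
      ((hasDerivAt_id s).const_mul mu).exp
    have h2 : HasDerivAt (fun t : ℝ => Real.exp (lam * t)) (Real.exp (lam * s) * (lam * 1)) s :=
      ((hasDerivAt_id s).const_mul lam).exp
    have h3 := (h1.const_mul lam).sub (h2.const_mul mu)
    refine h3.congr_deriv (Eq.symm ?_)
    ring
  have hcont : ContinuousOn F (Set.Icc 0 t0) :=
    (fun s _ => ((hd s).differentiableAt.continuousAt.continuousWithinAt))
  have hFeq : F t0 = F 0 := by
    simp only [hF, mul_zero, Real.exp_zero, mul_one]
    nlinarith [h]
  have hmem0 : (0 : ℝ) ∈ Set.Icc (0:ℝ) t0 := Set.left_mem_Icc.2 ht0.le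
  have hmemt0 : t0 ∈ Set.Icc (0:ℝ) t0 := Set.right_mem_Icc.2 ht0.le
  have hexplt : ∀ s ∈ interior (Set.Icc (0:ℝ) t0), Real.exp (lam * s) < Real.exp (mu * s) := by
    intro s hs
    rw [interior_Icc] at hs
    exact Real.exp_lt_exp.2 (by nlinarith [hs.1])
  rcases hne.lt_or_gt with hneg | hpos
  · have hanti : StrictAntiOn F (Set.Icc 0 t0) := by
      apply strictAntiOn_of_deriv_neg (convex_Icc 0 t0) hcont
      intro s hs
      rw [(hd s).deriv]
      have := hexplt s hs
      nlinarith
    exact absurd hFeq (by have := hanti hmem0 hmemt0 ht0; linarith)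
  · have hmono : StrictMonoOn F (Set.Icc 0 t0) := by
      apply strictMonoOn_of_deriv_pos (convex_Icc 0 t0) hcont
      intro s hs
      rw [(hd s).deriv]
      have := hexplt s hs
      nlinarith
    exact absurd hFeq (by have := hmono hmem0 hmemt0 ht0; linarith)
lemma core_complexroots (τ δ c t0 : ℝ) (hδ : δ ≠ 0) (hc : c ≠ 0) (ht0 : 0 < t0)
    (u v : ℝ → ℝ) (hu : ∀ t, HasDerivAt u (v t) t)
    (hv : ∀ t, HasDerivAt v (τ * v t - δ * u t) t)
    (hu0 : u 0 = -(c / δ)) (hv0 : v 0 = 0) (hut0 : u t0 = u 0) :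
    τ ^ 2 < 4 * δ := by
  by_contra hD
  push_neg at hD
  rcases eq_or_lt_of_le hD with heq | hlt
  · -- repeated root lam = τ/2
    have hτ : τ ≠ 0 := by
      intro h; apply hδ; nlinarith
    have hsol := sol_real τ δ (τ/2) (τ/2) u v hu hv (by ring) (by linear_combination (-1/4 : ℝ) * heq)
    set K : ℝ := v 0 - τ/2 * u 0 with hK
    set W : ℝ → ℝ := fun t => u t * Real.exp (-(τ/2 * t)) - K * t with hW
    have hd : ∀ s : ℝ, HasDerivAt W 0 s := by
      intro s
      have h2 : HasDerivAt (fun t : ℝ => Real.exp (-(τ/2 * t)))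
          (Real.exp (-(τ/2 * s)) * -(τ/2 * 1)) s := (((hasDerivAt_id s).const_mul (τ/2)).neg).exp
      have h3 := ((hu s).mul h2).sub ((hasDerivAt_id s).const_mul K)
      refine h3.congr_deriv (Eq.symm ?_)
      have hE : Real.exp (τ/2 * s) * Real.exp (-(τ/2 * s)) = 1 := by
        rw [← Real.exp_add]; simp
      linear_combination (-(Real.exp (-(τ/2 * s)))) * hsol s - K * hE
    have hconst := is_const_of_deriv_eq_zero (fun s => (hd s).differentiableAt)
        (fun s => (hd s).deriv) t0 0
    have h0 : u t0 * Real.exp (-(τ/2 * t0)) - K * t0 = u 0 := by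
      simpa [hW] using hconst
    rw [hut0, hu0] at h0
    rw [hK, hv0, hu0] at h0
    set x : ℝ := -(τ/2 * t0) with hx
    have hx0 : x ≠ 0 := by
      rw [hx, neg_ne_zero]
      exact mul_ne_zero (div_ne_zero hτ two_ne_zero) ht0.ne'
    have h2 : (c/δ) * (Real.exp x - (1 + x)) = 0 := by
      rw [hx]; linear_combination -h0
    have h3 : Real.exp x = 1 + x := by
      rcases mul_eq_zero.1 h2 with h | h
      · exact absurd h (div_ne_zero hc hδ)
      · linarith
    have := Real.add_one_lt_exp hx0
    linarith
  · -- distinct real roots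
    set sq : ℝ := Real.sqrt (τ^2 - 4*δ) with hsqdef
    have hsq : sq^2 = τ^2 - 4*δ := Real.sq_sqrt (by linarith)
    have hsqpos : 0 < sq := Real.sqrt_pos.2 (by linarith)
    set lam : ℝ := (τ - sq)/2 with hlam
    set mu : ℝ := (τ + sq)/2 with hmu
    have hsum : lam + mu = τ := by rw [hlam, hmu]; ring
    have hprod : lam * mu = δ := by rw [hlam, hmu]; linear_combination (-1/4 : ℝ) * hsq
    have h1 := sol_real τ δ lam mu u v hu hv hsum hprod t0
    have h2 := sol_real τ δ mu lam u v hu hv (by linarith) (by linarith [hprod, mul_comm lam mu]) t0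
    rw [hut0, hu0, hv0] at h1 h2
    have h3 : (c/δ) * (lam * (Real.exp (mu * t0) - 1) - mu * (Real.exp (lam * t0) - 1)) = 0 := by
      linear_combination h2 - h1
    have h4 : lam * (Real.exp (mu * t0) - 1) = mu * (Real.exp (lam * t0) - 1) := by
      rcases mul_eq_zero.1 h3 with h | h
      · exact absurd h (div_ne_zero hc hδ)
      · linarith
    have hne : lam * mu ≠ 0 := by rw [hprod]; exact hδ
    exact no_real_distinct lam mu t0 (by rw [hlam, hmu]; linarith) hne ht0 h4
lemma core_pos (τ δ c t0 : ℝ) (hδ : δ ≠ 0) (hc : c ≠ 0) (ht0 : 0 < t0)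
    (u v : ℝ → ℝ) (hu : ∀ t, HasDerivAt u (v t) t)
    (hv : ∀ t, HasDerivAt v (τ * v t - δ * u t) t)
    (hu0 : u 0 = -(c / δ)) (hv0 : v 0 = 0) (hut0 : u t0 = u 0) (hvt0 : v t0 ≠ 0)
    (key : τ ^ 2 < 4 * δ) : 0 < τ := by
  by_contra hτ
  push_neg at hτ
  obtain ⟨ω, hω, hω2⟩ : ∃ ω : ℝ, 0 < ω ∧ (τ/2)^2 + ω^2 = δ := by
    refine ⟨Real.sqrt (4 * δ - τ ^ 2) / 2, ?_, ?_⟩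
    · have := Real.sqrt_pos.2 (show 0 < 4 * δ - τ ^ 2 by linarith)
      linarith
    · have := Real.sq_sqrt (show (0:ℝ) ≤ 4 * δ - τ ^ 2 by linarith)
      nlinarith [this]
  set lam : ℂ := (↑(τ/2) + ↑ω * Complex.I) with hlamdef
  set mu : ℂ := (↑(τ/2) - ↑ω * Complex.I) with hmudef
  have hsum : lam + mu = (τ : ℂ) := by rw [hlamdef, hmudef]; push_cast; ring
  have hprod : lam * mu = (δ : ℂ) := by
    have h2 : ((τ/2 : ℝ) : ℂ)^2 + ((ω : ℝ) : ℂ)^2 = (δ : ℂ) := by exact_mod_cast hω2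
    rw [hlamdef, hmudef]
    linear_combination h2 - ((ω : ℝ) : ℂ)^2 * Complex.I_sq
  have hsolC := sol_complex τ δ lam mu u v hu hv hsum hprod t0
  rw [hut0, hu0, hv0] at hsolC
  rw [hlamdef, hmudef] at hsolC
  have him := congrArg Complex.im hsolC
  have hre := congrArg Complex.re hsolC
  simp [Complex.exp_re, Complex.exp_im, Complex.mul_re, Complex.mul_im] at him hre
  set Ea : ℝ := Real.exp (τ/2 * t0) with hEa
  set s : ℝ := ω * t0 with hs
  have hd : c / δ ≠ 0 := div_ne_zero hc hδ
  have hE : Ea * (ω * Real.cos s - τ/2 * Real.sin s) = ω := by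
    have h3 : (c/δ) * (Ea * (ω * Real.cos s - τ/2 * Real.sin s) - ω) = 0 := by
      linear_combination -him
    rcases mul_eq_zero.1 h3 with h | h
    · exact absurd h hd
    · linarith
  rcases eq_or_lt_of_le hτ with hτ0 | hτneg
  · -- τ = 0
    have hEa1 : Ea = 1 := by simp [hEa, hτ0]
    have hcos : Real.cos s = 1 := by
      rw [hEa1, hτ0] at hE
      have h5 : ω * Real.cos s = ω * 1 := by linarith [hE]
      exact mul_left_cancel₀ hω.ne' h5
    have hsin : Real.sin s = 0 := by
      have h1 := Real.sin_sq_add_cos_sq s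
      have h2 : Real.sin s ^ 2 = 0 := by nlinarith
      exact pow_eq_zero_iff (n := 2) (by norm_num) |>.1 h2
    apply hvt0
    simp [hτ0, hsin, hcos, hEa1] at hre
    linarith [hre]
  · -- τ < 0
    set Eb : ℝ := Real.exp (-(τ/2 * t0)) with hEb
    have hEab : Ea * Eb = 1 := by rw [hEa, hEb, ← Real.exp_add]; simp
    have h4 : ω * Real.cos s - τ/2 * Real.sin s = ω * Eb := by
      linear_combination Eb * hE - (ω * Real.cos s - τ/2 * Real.sin s) * hEab
    have hx : -(τ/2 * t0) ≠ 0 := by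
      have : 0 < -(τ/2 * t0) := by nlinarith
      exact this.ne'
    have hexp : -(τ/2 * t0) + 1 < Eb := Real.add_one_lt_exp hx
    have hsinle : Real.sin s ≤ s := Real.sin_le (by rw [hs]; positivity)
    have hcosle : Real.cos s ≤ 1 := Real.cos_le_one s
    have p1 : ω * (-(τ/2 * t0) + 1) < ω * Eb := mul_lt_mul_of_pos_left hexp hω
    have p2 : -(τ/2) * Real.sin s ≤ -(τ/2) * s :=
      mul_le_mul_of_nonneg_left hsinle (show (0:ℝ) ≤ -(τ/2) by linarith)
    have p3 : ω * Real.cos s ≤ ω * 1 := mul_le_mul_of_nonneg_left hcosle hω.le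
    have hb : ω * (-(τ/2 * t0) + 1) = -(τ/2) * s + ω := by rw [hs]; ring
    linarith [h4, p1, p2, p3, hb]

/-- If the solution of `ż = Az + b` starting at the tangency point `(0, -b1/a12)` reaches the
y-axis at a time `t0 > 0` at a point different from the tangency point, then `A` has
non-real eigenvalues with positive real part: `(tr A)² < 4 det A` and `tr A > 0`
(the equilibrium is an unstable focus). -/
theorem stmt_2 (a11 a12 a21 a22 b1 b2 : ℝ) (h12 : a12 ≠ 0)
    (hdet : a11 * a22 - a12 * a21 ≠ 0) (hB : a12 * b2 - a22 * b1 ≠ 0)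
    (x y : ℝ → ℝ)
    (hx : ∀ t : ℝ, HasDerivAt x (a11 * x t + a12 * y t + b1) t)
    (hy : ∀ t : ℝ, HasDerivAt y (a21 * x t + a22 * y t + b2) t)
    (hx0 : x 0 = 0) (hy0 : y 0 = -b1 / a12)
    (hret : ∃ t0 : ℝ, 0 < t0 ∧ x t0 = 0 ∧ y t0 ≠ -b1 / a12) :
    (a11 + a22) ^ 2 < 4 * (a11 * a22 - a12 * a21) ∧ 0 < a11 + a22 := by
  obtain ⟨t0, ht0, hxt0, hyt0⟩ := hret
  set τ : ℝ := a11 + a22 with hτdef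
  set δ : ℝ := a11 * a22 - a12 * a21 with hδdef
  set c : ℝ := a12 * b2 - a22 * b1 with hcdef
  set u : ℝ → ℝ := fun t => x t - c / δ with hudef
  set v : ℝ → ℝ := fun t => a11 * x t + a12 * y t + b1 with hvdef
  have hu : ∀ t, HasDerivAt u (v t) t := fun t => (hx t).sub_const _
  have hv : ∀ t, HasDerivAt v (τ * v t - δ * u t) t := by
    intro t
    have h := (((hx t).const_mul a11).add ((hy t).const_mul a12)).add_const b1
    refine h.congr_deriv (Eq.symm ?_)
    rw [hvdef, hudef, hτdef, hδdef, hcdef]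
    field_simp [show a11 * a22 - a12 * a21 ≠ 0 from hdet]
    ring
  have hu0 : u 0 = -(c / δ) := by rw [hudef]; simp [hx0]
  have hv0 : v 0 = 0 := by
    rw [hvdef]
    simp only [hx0, hy0]
    field_simp
    ring
  have hut0 : u t0 = u 0 := by rw [hudef]; simp [hx0, hxt0]
  have hvt0 : v t0 ≠ 0 := by
    rw [hvdef]
    simp only [hxt0]
    intro h
    apply hyt0
    field_simp
    linarith
  have key := core_complexroots τ δ c t0 hdet hB ht0 u v hu hv hu0 hv0 hut0
  exact ⟨key, core_pos τ δ c t0 hdet hB ht0 u v hu hv hu0 hv0 hut0 hvt0 key⟩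
end

section
/- Let α > 0 and define ψ₊(t) = 1 − e^{αt}(cos t − α sin t). Then there exists a unique t̂ ∈ (π, 2π) with ψ₊(t̂) = 0; moreover ψ₊(t) > 0 for t ∈ (π, t̂) and ψ₊(π) = 1 + e^{απ} > 0, ψ₊(2π) = 1 − e^{2απ} < 0. -/
open Real

lemma stmt6_deriv (α t : ℝ) :
    HasDerivAt (fun t => 1 - Real.exp (α * t) * (Real.cos t - α * Real.sin t))
      (Real.exp (α * t) * (1 + α ^ 2) * Real.sin t) t := by
  have h1 : HasDerivAt (fun t : ℝ => Real.exp (α * t)) (α * Real.exp (α * t)) t := by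
    have := ((hasDerivAt_id t).const_mul α).exp
    simp only [id, mul_one] at this
    exact this.congr_deriv (mul_comm _ _)
  have h2 : HasDerivAt (fun t : ℝ => Real.cos t - α * Real.sin t)
      (-Real.sin t - α * Real.cos t) t :=
    (Real.hasDerivAt_cos t).sub ((Real.hasDerivAt_sin t).const_mul α)
  have := ((h1.mul h2)).const_sub 1
  exact this.congr_deriv (by ring)

/-- For `α > 0`, the function `ψ₊(t) = 1 - e^{αt}(cos t - α sin t)` has a unique zero
`t̂ ∈ (π, 2π)`; it is positive on `(π, t̂)`, with `ψ₊(π) = 1 + e^{απ} > 0` and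
`ψ₊(2π) = 1 - e^{2απ} < 0`. -/
theorem stmt_6 (α : ℝ) (hα : 0 < α) :
    ∃ th : ℝ, th ∈ Set.Ioo π (2 * π) ∧
      1 - Real.exp (α * th) * (Real.cos th - α * Real.sin th) = 0 ∧
      (∀ t ∈ Set.Ioo π (2 * π),
        1 - Real.exp (α * t) * (Real.cos t - α * Real.sin t) = 0 → t = th) ∧
      (∀ t ∈ Set.Ioo π th,
        0 < 1 - Real.exp (α * t) * (Real.cos t - α * Real.sin t)) ∧
      1 - Real.exp (α * π) * (Real.cos π - α * Real.sin π) = 1 + Real.exp (α * π) ∧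
      0 < 1 + Real.exp (α * π) ∧
      1 - Real.exp (α * (2 * π)) * (Real.cos (2 * π) - α * Real.sin (2 * π))
        = 1 - Real.exp (2 * α * π) ∧
      1 - Real.exp (2 * α * π) < 0 := by
  set f : ℝ → ℝ := fun t => 1 - Real.exp (α * t) * (Real.cos t - α * Real.sin t) with hf
  have hpi : (0:ℝ) < π := Real.pi_pos
  have hle : π ≤ 2 * π := by linarith
  have hcont : ContinuousOn f (Set.Icc π (2 * π)) :=
    fun x _ => ((stmt6_deriv α x).continuousAt).continuousWithinAt
  have hanti : StrictAntiOn f (Set.Icc π (2 * π)) := by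
    apply strictAntiOn_of_deriv_neg (convex_Icc _ _) hcont
    intro x hx
    rw [interior_Icc] at hx
    rw [(stmt6_deriv α x).deriv]
    have hsin : Real.sin x < 0 := by
      have h := Real.sin_pos_of_pos_of_lt_pi (x := x - π) (by linarith [hx.1]) (by linarith [hx.2])
      rw [Real.sin_sub_pi] at h
      linarith
    have : (0:ℝ) < Real.exp (α * x) * (1 + α ^ 2) :=
      mul_pos (Real.exp_pos _) (by positivity)
    exact mul_neg_of_pos_of_neg this hsin
  have hfπ : f π = 1 + Real.exp (α * π) := by
    simp [hf, Real.cos_pi, Real.sin_pi]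
  have hf2π : f (2 * π) = 1 - Real.exp (2 * α * π) := by
    simp [hf, Real.cos_two_pi, Real.sin_two_pi]
    ring_nf
  have hπpos : (0:ℝ) < 1 + Real.exp (α * π) := by positivity
  have h2πneg : 1 - Real.exp (2 * α * π) < 0 := by
    have : (1:ℝ) < Real.exp (2 * α * π) := by
      have : (0:ℝ) < 2 * α * π := by positivity
      simpa using Real.exp_lt_exp.2 this
    linarith
  have hmem : (0:ℝ) ∈ Set.Ioo (f (2 * π)) (f π) := by
    rw [hfπ, hf2π]; exact ⟨h2πneg, hπpos⟩
  obtain ⟨th, hth, hthf⟩ := intermediate_value_Ioo' hle hcont hmem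
  refine ⟨th, hth, hthf, ?_, ?_, hfπ, hπpos, hf2π, h2πneg⟩
  · intro t ht htf
    have htf' : f t = 0 := htf
    exact hanti.injOn (Set.Ioo_subset_Icc_self ht) (Set.Ioo_subset_Icc_self hth)
      (by rw [htf', hthf])
  · intro t ht
    have h1 : t ∈ Set.Icc π (2 * π) := ⟨le_of_lt ht.1, le_of_lt (ht.2.trans hth.2)⟩
    have := hanti h1 (Set.Ioo_subset_Icc_self hth) ht.2
    rw [hthf] at this
    exact this
end

section
/- Let α > 0, β > 0 and consider the family of points parametrized by t ∈ (π, t̂): y(t) = −(β/(1+α²)) e^{−αt} ψ₊(t)/sin t and P(t) = (β/(1+α²)) e^{αt} ψ₋(t)/sin t, where ψ±(t) = 1 − e^{±αt}(cos t ∓ α sin t) and t̂ ∈ (π, 2π) is the unique zero of ψ₊ in (π, 2π). Then for all t ∈ (π, t̂): y(t) > 0, P(t) < 0, and the ratio of derivatives satisfies P'(t)/y'(t) = (y(t)/P(t)) e^{2αt}. -/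
open Real

noncomputable def psiPlus (α t : ℝ) : ℝ :=
  1 - Real.exp (α * t) * (Real.cos t - α * Real.sin t)

noncomputable def psiMinus (α t : ℝ) : ℝ :=
  1 - Real.exp (-(α * t)) * (Real.cos t + α * Real.sin t)

/-- Parametrization of the starting height of the right half-return map. -/
noncomputable def yPar (α β t : ℝ) : ℝ :=
  -(β / (1 + α ^ 2)) * Real.exp (-(α * t)) * psiPlus α t / Real.sin t

/-- Parametrization of the return height of the right half-return map. -/
noncomputable def PPar (α β t : ℝ) : ℝ :=
  (β / (1 + α ^ 2)) * Real.exp (α * t) * psiMinus α t / Real.sin t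

lemma hasDerivAt_psiPlus (α t : ℝ) :
    HasDerivAt (psiPlus α) ((1 + α ^ 2) * Real.exp (α * t) * Real.sin t) t := by
  have h1 : HasDerivAt (fun t : ℝ => α * t) α t := by
    simpa using (hasDerivAt_id t).const_mul α
  have h2 : HasDerivAt (fun t : ℝ => Real.exp (α * t)) (Real.exp (α * t) * α) t := h1.exp
  have h3 : HasDerivAt (fun t : ℝ => Real.cos t - α * Real.sin t)
      (-Real.sin t - α * Real.cos t) t :=
    (Real.hasDerivAt_cos t).sub ((Real.hasDerivAt_sin t).const_mul α)
  have h4 := (h2.mul h3).const_sub 1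
  exact h4.congr_deriv (by ring)

lemma hasDerivAt_psiMinus (α t : ℝ) :
    HasDerivAt (psiMinus α) ((1 + α ^ 2) * Real.exp (-(α * t)) * Real.sin t) t := by
  have h1 : HasDerivAt (fun t : ℝ => -(α * t)) (-α) t := by
    simpa using ((hasDerivAt_id t).const_mul α).fun_neg
  have h2 : HasDerivAt (fun t : ℝ => Real.exp (-(α * t))) (Real.exp (-(α * t)) * (-α)) t :=
    h1.exp
  have h3 : HasDerivAt (fun t : ℝ => Real.cos t + α * Real.sin t)
      (-Real.sin t + α * Real.cos t) t :=
    (Real.hasDerivAt_cos t).add ((Real.hasDerivAt_sin t).const_mul α)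
  have h4 := (h2.mul h3).const_sub 1
  exact h4.congr_deriv (by ring)

lemma deriv_yPar (α β t : ℝ) (hs : Real.sin t ≠ 0) :
    deriv (yPar α β) t = -(β / (1 + α ^ 2)) * psiMinus α t / Real.sin t ^ 2 := by
  have hE : HasDerivAt (fun t : ℝ => Real.exp (-(α * t))) (Real.exp (-(α * t)) * (-α)) t := by
    have h1 : HasDerivAt (fun t : ℝ => -(α * t)) (-α) t := by
      simpa using ((hasDerivAt_id t).const_mul α).fun_neg
    exact h1.exp
  have hnum := (hE.const_mul (-(β / (1 + α ^ 2)))).mul (hasDerivAt_psiPlus α t)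
  have hdiv := hnum.div (Real.hasDerivAt_sin t) hs
  have h5 : deriv (yPar α β) t =
      ((-(β / (1 + α ^ 2)) * (Real.exp (-(α * t)) * (-α)) * psiPlus α t +
          -(β / (1 + α ^ 2)) * Real.exp (-(α * t)) *
            ((1 + α ^ 2) * Real.exp (α * t) * Real.sin t)) * Real.sin t -
        -(β / (1 + α ^ 2)) * Real.exp (-(α * t)) * psiPlus α t * Real.cos t) /
          Real.sin t ^ 2 := hdiv.deriv
  rw [h5]
  have ha : (1 : ℝ) + α ^ 2 ≠ 0 := by positivity
  have h1 := Real.sin_sq_add_cos_sq t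
  rw [div_eq_div_iff (by positivity) (by positivity)]
  unfold psiPlus psiMinus
  rw [Real.exp_neg]
  field_simp
  linear_combination (-(β * Real.exp (α * t))) * h1

lemma deriv_PPar (α β t : ℝ) (hs : Real.sin t ≠ 0) :
    deriv (PPar α β) t = (β / (1 + α ^ 2)) * psiPlus α t / Real.sin t ^ 2 := by
  have h1 : HasDerivAt (fun t : ℝ => α * t) α t := by
    simpa using (hasDerivAt_id t).const_mul α
  have hE : HasDerivAt (fun t : ℝ => Real.exp (α * t)) (Real.exp (α * t) * α) t := h1.exp
  have hnum := (hE.const_mul (β / (1 + α ^ 2))).mul (hasDerivAt_psiMinus α t)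
  have hdiv := hnum.div (Real.hasDerivAt_sin t) hs
  have h5 : deriv (PPar α β) t =
      (((β / (1 + α ^ 2)) * (Real.exp (α * t) * α) * psiMinus α t +
          (β / (1 + α ^ 2)) * Real.exp (α * t) *
            ((1 + α ^ 2) * Real.exp (-(α * t)) * Real.sin t)) * Real.sin t -
        (β / (1 + α ^ 2)) * Real.exp (α * t) * psiMinus α t * Real.cos t) /
          Real.sin t ^ 2 := hdiv.deriv
  rw [h5]
  have ha : (1 : ℝ) + α ^ 2 ≠ 0 := by positivity
  have h1 := Real.sin_sq_add_cos_sq t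
  rw [div_eq_div_iff (by positivity) (by positivity)]
  unfold psiPlus psiMinus
  rw [Real.exp_neg]
  field_simp
  linear_combination β * h1

/-- Along the parametrization of the right Poincaré half-return map one has `y(t) > 0`,
`P(t) < 0`, and `P'(t)/y'(t) = (y(t)/P(t)) e^{2αt}` for `t ∈ (π, t̂)`, where `t̂` is the
unique zero of `ψ₊` in `(π, 2π)`. -/
theorem stmt_9 (α β th : ℝ) (hα : 0 < α) (hβ : 0 < β)
    (hth : th ∈ Set.Ioo π (2 * π)) (hroot : psiPlus α th = 0)
    (huniq : ∀ t ∈ Set.Ioo π (2 * π), psiPlus α t = 0 → t = th) :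
    ∀ t ∈ Set.Ioo π th,
      0 < yPar α β t ∧ PPar α β t < 0 ∧
      deriv (PPar α β) t / deriv (yPar α β) t
        = (yPar α β t / PPar α β t) * Real.exp (2 * α * t) := by
  intro t ht
  have hπ := Real.pi_pos
  have ht1 : π < t := ht.1
  have ht2 : t < th := ht.2
  have h2π : t < 2 * π := lt_trans ht2 hth.2
  -- sin t < 0
  have hsp : 0 < Real.sin (t - π) :=
    Real.sin_pos_of_pos_of_lt_pi (by linarith) (by linarith)
  have hsin : Real.sin t < 0 := by
    rw [Real.sin_sub_pi] at hsp; linarith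
  have hs' : Real.sin t ≠ 0 := ne_of_lt hsin
  -- psiPlus positive on (π, th)
  have hcont : Continuous (psiPlus α) := by
    unfold psiPlus
    exact continuous_const.sub
      ((Real.continuous_exp.comp (continuous_const.mul continuous_id)).mul
        (Real.continuous_cos.sub (continuous_const.mul Real.continuous_sin)))
  have hψπ : 0 < psiPlus α π := by
    have h : psiPlus α π = 1 + Real.exp (α * π) := by
      simp [psiPlus, Real.cos_pi, Real.sin_pi]
    rw [h]; positivity
  have hψp : 0 < psiPlus α t := by
    rcases lt_or_ge 0 (psiPlus α t) with h | h
    · exact h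
    exfalso
    obtain ⟨s, hsmem, hs0⟩ := intermediate_value_Icc' (le_of_lt ht1) hcont.continuousOn
      (show (0 : ℝ) ∈ Set.Icc (psiPlus α t) (psiPlus α π) from ⟨h, le_of_lt hψπ⟩)
    have hsπ : π < s := by
      rcases eq_or_lt_of_le hsmem.1 with he | hl
      · rw [← he] at hs0; linarith
      · exact hl
    have heq := huniq s ⟨hsπ, by linarith [hsmem.2]⟩ hs0
    have : th ≤ t := heq ▸ hsmem.2
    linarith
  -- psiMinus positive
  have he1 : Real.exp (-(α * t)) < 1 := by
    rw [Real.exp_lt_one_iff]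
    nlinarith
  have hep : (0 : ℝ) < Real.exp (-(α * t)) := Real.exp_pos _
  have hψm : 0 < psiMinus α t := by
    unfold psiMinus
    nlinarith [Real.cos_le_one t, mul_pos hα (neg_pos.mpr hsin),
      mul_le_mul_of_nonneg_left (Real.cos_le_one t) hep.le,
      mul_pos hep (mul_pos hα (neg_pos.mpr hsin))]
  have hc0 : 0 < β / (1 + α ^ 2) := by positivity
  -- y > 0
  have hy : 0 < yPar α β t := by
    unfold yPar
    apply div_pos_of_neg_of_neg _ hsin
    have h := mul_pos (mul_pos hc0 (Real.exp_pos (-(α * t)))) hψp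
    linarith
  -- P < 0
  have hP : PPar α β t < 0 := by
    unfold PPar
    exact div_neg_of_pos_of_neg (mul_pos (mul_pos hc0 (Real.exp_pos (α * t))) hψm) hsin
  refine ⟨hy, hP, ?_⟩
  rw [deriv_yPar α β t hs', deriv_PPar α β t hs']
  unfold yPar PPar
  have hE2 : Real.exp (2 * α * t) = Real.exp (α * t) * Real.exp (α * t) := by
    rw [← Real.exp_add]; ring_nf
  rw [Real.exp_neg, hE2]
  have hψm' : psiMinus α t ≠ 0 := ne_of_gt hψm
  have ha : (1 : ℝ) + α ^ 2 ≠ 0 := by positivity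
  have hβ' : β ≠ 0 := ne_of_gt hβ
  field_simp
end

section
/- Let α > 0, β > 0 and let P_R be the right Poincaré half-return map parametrized by (y(t), P(t)), t ∈ (π, t̂), as above. Then the second derivative of P_R with respect to y satisfies d²P_R/dy² = (2β²/(1+α²)) · (sinh(αt) − α sin t) · e^{3αt} / P(t)³ < 0 for all t ∈ (π, t̂); in particular P_R is strictly concave. -/
open Real

lemma hasDerivAt_expMul (α t : ℝ) :
    HasDerivAt (fun t => Real.exp (α * t)) (α * Real.exp (α * t)) t := by
  simpa [mul_comm] using ((hasDerivAt_id t).const_mul α).exp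

lemma hasDerivAt_yPar (α β t : ℝ) (hs : Real.sin t ≠ 0) :
    HasDerivAt (yPar α β) (-(β / (1 + α ^ 2)) * psiMinus α t / Real.sin t ^ 2) t := by
  have he : HasDerivAt (fun t => Real.exp (-(α * t))) (-α * Real.exp (-(α * t))) t := by
    simpa [neg_mul] using hasDerivAt_expMul (-α) t
  have hnum : HasDerivAt (fun t => -(β / (1 + α ^ 2)) * Real.exp (-(α * t)) * psiPlus α t)
      (-(β / (1 + α ^ 2)) * ((-α * Real.exp (-(α * t))) * psiPlus α t
        + Real.exp (-(α * t)) * ((1 + α ^ 2) * Real.exp (α * t) * Real.sin t))) t := by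
    have := ((he.const_mul (-(β / (1 + α ^ 2)))).mul (hasDerivAt_psiPlus α t))
    refine this.congr_deriv ?_
    ring
  have h := hnum.div (Real.hasDerivAt_sin t) hs
  have hexp : Real.exp (-(α * t)) * Real.exp (α * t) = 1 := by
    rw [← Real.exp_add]; simp
  have hsc := Real.sin_sq_add_cos_sq t
  refine h.congr_deriv ?_
  congr 1
  simp only [psiPlus, psiMinus]
  linear_combination (-(β/(1+α^2))) * hexp
    + (-(β/(1+α^2))) * Real.exp (-(α*t)) * Real.exp (α*t) * hsc

lemma hasDerivAt_PPar (α β t : ℝ) (hs : Real.sin t ≠ 0) :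
    HasDerivAt (PPar α β) ((β / (1 + α ^ 2)) * psiPlus α t / Real.sin t ^ 2) t := by
  have hnum : HasDerivAt (fun t => (β / (1 + α ^ 2)) * Real.exp (α * t) * psiMinus α t)
      ((β / (1 + α ^ 2)) * ((α * Real.exp (α * t)) * psiMinus α t
        + Real.exp (α * t) * ((1 + α ^ 2) * Real.exp (-(α * t)) * Real.sin t))) t := by
    have := (((hasDerivAt_expMul α t).const_mul (β / (1 + α ^ 2))).mul
      (hasDerivAt_psiMinus α t))
    refine this.congr_deriv ?_
    ring
  have h := hnum.div (Real.hasDerivAt_sin t) hs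
  have hexp : Real.exp (-(α * t)) * Real.exp (α * t) = 1 := by
    rw [← Real.exp_add]; simp
  have hsc := Real.sin_sq_add_cos_sq t
  refine h.congr_deriv ?_
  congr 1
  simp only [psiPlus, psiMinus]
  linear_combination (β/(1+α^2)) * hexp
    + (β/(1+α^2)) * Real.exp (-(α*t)) * Real.exp (α*t) * hsc

lemma sin_neg_of_Ioo {t : ℝ} (ht : t ∈ Set.Ioo π (2 * π)) : Real.sin t < 0 := by
  have hpos := Real.sin_pos_of_pos_of_lt_pi (x := t - π)
    (by have := ht.1; linarith) (by have := ht.2; linarith)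
  have h := Real.sin_add_pi (t - π)
  rw [sub_add_cancel] at h
  linarith

lemma psiMinus_pos {α t : ℝ} (hα : 0 < α) (ht : t ∈ Set.Ioo π (2 * π)) :
    0 < psiMinus α t := by
  have hs : Real.sin t < 0 := sin_neg_of_Ioo ht
  have htpos : 0 < t := lt_trans Real.pi_pos ht.1
  have he1 : Real.exp (-(α * t)) < 1 := by
    rw [Real.exp_lt_one_iff]; nlinarith
  have he0 : 0 < Real.exp (-(α * t)) := Real.exp_pos _
  have hq : Real.cos t + α * Real.sin t < 1 := by
    have := Real.cos_le_one t
    nlinarith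
  have := mul_pos he0 (sub_pos.2 hq)
  unfold psiMinus
  nlinarith


set_option maxHeartbeats 1000000 in
lemma final_alg (α β u s k : ℝ) (hβ : β ≠ 0) (hu : u ≠ 0) (hs : s ≠ 0)
    (hα2 : (1:ℝ) + α ^ 2 ≠ 0) (hm : 1 - u⁻¹ * (k + α * s) ≠ 0) :
    -(((1 + α ^ 2) * u * s * (1 - u⁻¹ * (k + α * s))
        - (1 - u * (k - α * s)) * ((1 + α ^ 2) * u⁻¹ * s)) / (1 - u⁻¹ * (k + α * s)) ^ 2)
      * (-(β / (1 + α ^ 2)) * (1 - u⁻¹ * (k + α * s)) / s ^ 2)⁻¹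
    = 2 * β ^ 2 / (1 + α ^ 2) * ((u - u⁻¹) / 2 - α * s) * u ^ 3
      / (β / (1 + α ^ 2) * u * (1 - u⁻¹ * (k + α * s)) / s) ^ 3 := by
  have hw : u - (k + α * s) ≠ 0 := by
    intro h
    apply hm
    field_simp
    linarith
  have hmrw : 1 - u⁻¹ * (k + α * s) = (u - (k + α * s)) / u := by
    field_simp
  rw [hmrw]
  field_simp
  ring

/-- The second derivative of the right Poincaré half-return map `P_R` with respect to
the starting height `y` equals `(2β²/(1+α²))(sinh(αt) - α sin t)e^{3αt}/P(t)³`, which is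
negative on `(π, t̂)`; in particular `P_R` is strictly concave. -/
theorem stmt_11 (α β th : ℝ) (hα : 0 < α) (hβ : 0 < β)
    (hth : th ∈ Set.Ioo π (2 * π)) (hroot : psiPlus α th = 0)
    (PR : ℝ → ℝ) (hPR : ∀ t ∈ Set.Ioo π th, PR (yPar α β t) = PPar α β t) :
    ∀ t ∈ Set.Ioo π th,
      deriv (deriv PR) (yPar α β t)
        = (2 * β ^ 2 / (1 + α ^ 2)) * (Real.sinh (α * t) - α * Real.sin t) *
            Real.exp (3 * α * t) / (PPar α β t) ^ 3 ∧
      (2 * β ^ 2 / (1 + α ^ 2)) * (Real.sinh (α * t) - α * Real.sin t) *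
          Real.exp (3 * α * t) / (PPar α β t) ^ 3 < 0 := by
  have hα2 : (0:ℝ) < 1 + α ^ 2 := by positivity
  set I : Set ℝ := Set.Ioo π th with hI
  set f : ℝ → ℝ := yPar α β with hf
  have hsub : ∀ t ∈ I, t ∈ Set.Ioo π (2 * π) := fun t ht =>
    ⟨ht.1, lt_trans ht.2 hth.2⟩
  have hsin : ∀ t ∈ I, Real.sin t < 0 := fun t ht => sin_neg_of_Ioo (hsub t ht)
  have hpsiM : ∀ t ∈ I, 0 < psiMinus α t := fun t ht => psiMinus_pos hα (hsub t ht)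
  set D : ℝ → ℝ := fun t => -(β / (1 + α ^ 2)) * psiMinus α t / Real.sin t ^ 2 with hD
  have hfD : ∀ t ∈ I, HasDerivAt f (D t) t := fun t ht =>
    hasDerivAt_yPar α β t (ne_of_lt (hsin t ht))
  have hDneg : ∀ t ∈ I, D t < 0 := by
    intro t ht
    have h1 : (0:ℝ) < Real.sin t ^ 2 := by nlinarith [hsin t ht]
    have h2 := hpsiM t ht
    have h3 : 0 < β / (1 + α ^ 2) := by positivity
    simp only [hD]
    apply div_neg_of_neg_of_pos _ h1
    nlinarith
  have hanti : StrictAntiOn f I := by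
    apply strictAntiOn_of_deriv_neg (convex_Ioo _ _)
    · exact fun t ht => ((hfD t ht).continuousAt).continuousWithinAt
    · intro t ht
      rw [interior_Ioo] at ht
      rw [(hfD t ht).deriv]
      exact hDneg t ht
  have hinj : Set.InjOn f I := hanti.injOn
  set τ : ℝ → ℝ := Function.invFunOn f I with hτ
  have hτleft : ∀ t ∈ I, τ (f t) = t := fun t ht => hinj.leftInvOn_invFunOn ht
  have hkey : ∀ t₀ ∈ I, ∀ a b, a ∈ I → b ∈ I → a < t₀ → t₀ < b →
      (Set.Ioo (f b) (f a) ∈ nhds (f t₀) ∧ Set.Ioo (f b) (f a) ⊆ f '' Set.Ioo a b) := by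
    intro t₀ ht₀ a b ha hb hat hb'
    constructor
    · apply (isOpen_Ioo).mem_nhds
      exact ⟨hanti ht₀ hb hb', hanti ha ht₀ hat⟩
    · apply intermediate_value_Ioo' (le_of_lt (lt_trans hat hb'))
      intro x hx
      have hxI : x ∈ I := ⟨lt_of_lt_of_le ha.1 hx.1, lt_of_le_of_lt hx.2 hb.2⟩
      exact ((hfD x hxI).continuousAt).continuousWithinAt
  have himg : ∀ t₀ ∈ I, f '' I ∈ nhds (f t₀) := by
    intro t₀ ht₀
    have hπ := ht₀.1
    have hthh := ht₀.2
    have ha : (π + t₀) / 2 ∈ I := ⟨by linarith, by linarith⟩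
    have hb : (t₀ + th) / 2 ∈ I := ⟨by linarith, by linarith⟩
    have h1 := hkey t₀ ht₀ _ _ ha hb (by linarith) (by linarith)
    apply Filter.mem_of_superset h1.1
    refine h1.2.trans ?_
    apply Set.image_mono
    intro x hx
    exact ⟨lt_trans ha.1 hx.1, lt_trans hx.2 hb.2⟩
  have hτcont : ∀ t₀ ∈ I, ContinuousAt τ (f t₀) := by
    intro t₀ ht₀
    have hπ := ht₀.1
    have hthh := ht₀.2
    rw [ContinuousAt, hτleft t₀ ht₀, Metric.tendsto_nhds]
    intro ε hε
    set a : ℝ := max ((π + t₀) / 2) (t₀ - ε / 2) with ha'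
    set b : ℝ := min ((t₀ + th) / 2) (t₀ + ε / 2) with hb'
    have hat : a < t₀ := max_lt (by linarith) (by linarith)
    have hbt : t₀ < b := lt_min (by linarith) (by linarith)
    have haI : a ∈ I := ⟨lt_of_lt_of_le (by linarith : π < (π + t₀) / 2) (le_max_left _ _),
      lt_trans hat hthh⟩
    have hbI : b ∈ I := ⟨lt_trans hπ hbt,
      lt_of_le_of_lt (min_le_left _ _) (by linarith)⟩
    have h1 := hkey t₀ ht₀ a b haI hbI hat hbt
    filter_upwards [h1.1] with y hy
    obtain ⟨s, hs, rfl⟩ := h1.2 hy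
    have hsI : s ∈ I := ⟨lt_trans haI.1 hs.1, lt_trans hs.2 hbI.2⟩
    rw [hτleft s hsI, Real.dist_eq, abs_sub_lt_iff]
    have hub : b ≤ t₀ + ε / 2 := min_le_right _ _
    have hlb : t₀ - ε / 2 ≤ a := le_max_right _ _
    constructor
    · linarith [hs.2]
    · linarith [hs.1]
  have hτderiv : ∀ t₀ ∈ I, HasDerivAt τ (D t₀)⁻¹ (f t₀) := by
    intro t₀ ht₀
    apply HasDerivAt.of_local_left_inverse (hτcont t₀ ht₀)
    · rw [hτleft t₀ ht₀]; exact hfD t₀ ht₀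
    · exact ne_of_lt (hDneg t₀ ht₀)
    · filter_upwards [himg t₀ ht₀] with y hy
      exact Function.invFunOn_eq (by obtain ⟨s, hs, rfl⟩ := hy; exact ⟨s, hs, rfl⟩)
  have hE1 : ∀ t₀ ∈ I, PR =ᶠ[nhds (f t₀)] (PPar α β) ∘ τ := by
    intro t₀ ht₀
    filter_upwards [himg t₀ ht₀] with y hy
    obtain ⟨s, hs, rfl⟩ := hy
    simp only [Function.comp_apply, hτleft s hs]
    exact hPR s hs
  set G : ℝ → ℝ := fun t => -(psiPlus α t / psiMinus α t) with hG
  have hd1 : ∀ s ∈ I, deriv PR (f s) = G s := by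
    intro s hs
    rw [(hE1 s hs).deriv_eq]
    have hcomp : HasDerivAt ((PPar α β) ∘ τ)
        ((β / (1 + α ^ 2)) * psiPlus α s / Real.sin s ^ 2 * (D s)⁻¹) (f s) := by
      apply HasDerivAt.comp
      · rw [hτleft s hs]
        exact hasDerivAt_PPar α β s (ne_of_lt (hsin s hs))
      · exact hτderiv s hs
    rw [hcomp.deriv]
    have h1 : Real.sin s ≠ 0 := ne_of_lt (hsin s hs)
    have h2 : psiMinus α s ≠ 0 := ne_of_gt (hpsiM s hs)
    simp only [hD, hG]
    field_simp
  intro t ht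
  have hsinT : Real.sin t ≠ 0 := ne_of_lt (hsin t ht)
  have hpsiMT : psiMinus α t ≠ 0 := ne_of_gt (hpsiM t ht)
  have hE2 : deriv PR =ᶠ[nhds (f t)] fun y => G (τ y) := by
    filter_upwards [himg t ht] with y hy
    obtain ⟨s, hs, rfl⟩ := hy
    rw [hd1 s hs, hτleft s hs]
  have hGd : HasDerivAt G
      (-((((1 + α ^ 2) * Real.exp (α * t) * Real.sin t) * psiMinus α t
        - psiPlus α t * ((1 + α ^ 2) * Real.exp (-(α * t)) * Real.sin t))
          / psiMinus α t ^ 2)) t :=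
    ((hasDerivAt_psiPlus α t).div (hasDerivAt_psiMinus α t) hpsiMT).neg
  have hcomp2 : HasDerivAt (fun y => G (τ y))
      (-((((1 + α ^ 2) * Real.exp (α * t) * Real.sin t) * psiMinus α t
        - psiPlus α t * ((1 + α ^ 2) * Real.exp (-(α * t)) * Real.sin t))
          / psiMinus α t ^ 2) * (D t)⁻¹) (f t) := by
    have := HasDerivAt.comp (f t) (by rw [hτleft t ht]; exact hGd) (hτderiv t ht)
    exact this
  have hmain : deriv (deriv PR) (f t) =
      -((((1 + α ^ 2) * Real.exp (α * t) * Real.sin t) * psiMinus α t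
        - psiPlus α t * ((1 + α ^ 2) * Real.exp (-(α * t)) * Real.sin t))
          / psiMinus α t ^ 2) * (D t)⁻¹ := by
    rw [hE2.deriv_eq, hcomp2.deriv]
  constructor
  · rw [hmain]
    have hexp3 : Real.exp (3 * α * t) = Real.exp (α * t) ^ 3 := by
      rw [show 3 * α * t = α * t + (α * t + α * t) by ring, Real.exp_add, Real.exp_add]
      ring
    have hm' : 1 - (Real.exp (α * t))⁻¹ * (Real.cos t + α * Real.sin t) ≠ 0 := by
      have := hpsiMT
      simpa [psiMinus, Real.exp_neg] using this
    rw [Real.sinh_eq, hexp3]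
    simp only [hD, PPar, psiPlus, psiMinus, Real.exp_neg]
    exact final_alg α β (Real.exp (α * t)) (Real.sin t) (Real.cos t)
      (ne_of_gt hβ) (Real.exp_ne_zero _) hsinT (ne_of_gt hα2) hm'
  · have h1 : 0 < 2 * β ^ 2 / (1 + α ^ 2) := by positivity
    have h2 : 0 < Real.sinh (α * t) - α * Real.sin t := by
      have hsinh : 0 < Real.sinh (α * t) := by
        rw [Real.sinh_pos_iff]
        have := ht.1; have := Real.pi_pos
        nlinarith
      nlinarith [hsin t ht]
    have h3 : 0 < Real.exp (3 * α * t) := Real.exp_pos _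
    have hP : PPar α β t < 0 := by
      unfold PPar
      apply div_neg_of_pos_of_neg _ (hsin t ht)
      have := hpsiM t ht
      positivity
    have hP3 : PPar α β t ^ 3 < 0 := by
      exact Odd.pow_neg (by decide) hP
    apply div_neg_of_pos_of_neg _ hP3
    positivity
end

section
/- Let γ₃ > 0, ν > 0, and consider the left half-return data: for t ∈ (π/ν, t̂⁻) define φ±(t) = 1 − e^{±γ₃t}(cos(νt) ∓ (γ₃/ν) sin(νt)), and let K ≠ 0 be a real constant. Define y(t) = −η + K·φ₋(t) e^{γ₃t}/sin(νt) and Q(t) = −η − K·φ₊(t) e^{−γ₃t}/sin(νt). Then the ratio of derivatives satisfies Q'(t)/y'(t) = ((y(t) + η)/(Q(t) + η)) · e^{−2γ₃ t} for all t ∈ (π/ν, t̂⁻) with sin(νt) ≠ 0 and Q(t) ≠ −η. -/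
open Real

noncomputable def phiPlus (γ ν t : ℝ) : ℝ :=
  1 - Real.exp (γ * t) * (Real.cos (ν * t) - (γ / ν) * Real.sin (ν * t))

noncomputable def phiMinus (γ ν t : ℝ) : ℝ :=
  1 - Real.exp (-(γ * t)) * (Real.cos (ν * t) + (γ / ν) * Real.sin (ν * t))

/-- Arrival height of the inverse left half-return map, parametrized by time. -/
noncomputable def yL (γ ν η K t : ℝ) : ℝ :=
  -η + K * phiMinus γ ν t * Real.exp (γ * t) / Real.sin (ν * t)

/-- Starting height of the inverse left half-return map, parametrized by time. -/
noncomputable def QL (γ ν η K t : ℝ) : ℝ :=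
  -η - K * phiPlus γ ν t * Real.exp (-(γ * t)) / Real.sin (ν * t)

lemma hasDerivAt_yL (γ ν η K t : ℝ) (hν : ν ≠ 0) (hs : Real.sin (ν * t) ≠ 0) :
    HasDerivAt (yL γ ν η K) (K * ν * phiPlus γ ν t / (Real.sin (ν * t))^2) t := by
  have hlin : HasDerivAt (fun t : ℝ => γ * t) γ t := by
    simpa using (hasDerivAt_id t).const_mul γ
  have hlin' : HasDerivAt (fun t : ℝ => ν * t) ν t := by
    simpa using (hasDerivAt_id t).const_mul ν
  have he : HasDerivAt (fun t => Real.exp (γ * t)) (γ * Real.exp (γ * t)) t := by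
    simpa [mul_comm, Function.comp_def] using (Real.hasDerivAt_exp (γ * t)).comp t hlin
  have hen : HasDerivAt (fun t => Real.exp (-(γ * t))) (-γ * Real.exp (-(γ * t))) t := by
    have h2 : HasDerivAt (fun t : ℝ => -(γ * t)) (-γ) t := hlin.neg
    simpa [mul_comm, Function.comp_def] using (Real.hasDerivAt_exp (-(γ * t))).comp t h2
  have hsin : HasDerivAt (fun t => Real.sin (ν * t)) (ν * Real.cos (ν * t)) t := by
    simpa [mul_comm, Function.comp_def] using (Real.hasDerivAt_sin (ν * t)).comp t hlin'
  have hcos : HasDerivAt (fun t => Real.cos (ν * t)) (-(ν * Real.sin (ν * t))) t := by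
    simpa [mul_comm, Function.comp_def] using (Real.hasDerivAt_cos (ν * t)).comp t hlin'
  have hnum := (((hasDerivAt_const t (1:ℝ)).sub
      (hen.mul (hcos.add (hsin.const_mul (γ / ν))))).const_mul K).mul he
  have hfull := (hasDerivAt_const t (-η)).add (hnum.div hsin hs)
  have hmain : HasDerivAt (yL γ ν η K) _ t := hfull
  convert hmain using 1
  have hE : Real.exp (-(γ * t)) * Real.exp (γ * t) = 1 := by
    rw [← Real.exp_add]; simp
  unfold phiPlus
  simp only [Pi.add_apply, Pi.sub_apply, Pi.mul_apply]
  have hP := Real.sin_sq_add_cos_sq (ν * t)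
  field_simp
  linear_combination (-(K*ν^2)) * hE + (-(K*ν^2)*Real.exp (-(γ*t))*Real.exp (γ*t)) * hP

lemma hasDerivAt_QL (γ ν η K t : ℝ) (hν : ν ≠ 0) (hs : Real.sin (ν * t) ≠ 0) :
    HasDerivAt (QL γ ν η K) (-(K * ν * phiMinus γ ν t) / (Real.sin (ν * t))^2) t := by
  have hlin : HasDerivAt (fun t : ℝ => γ * t) γ t := by
    simpa using (hasDerivAt_id t).const_mul γ
  have hlin' : HasDerivAt (fun t : ℝ => ν * t) ν t := by
    simpa using (hasDerivAt_id t).const_mul ν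
  have he : HasDerivAt (fun t => Real.exp (γ * t)) (γ * Real.exp (γ * t)) t := by
    simpa [mul_comm, Function.comp_def] using (Real.hasDerivAt_exp (γ * t)).comp t hlin
  have hen : HasDerivAt (fun t => Real.exp (-(γ * t))) (-γ * Real.exp (-(γ * t))) t := by
    have h2 : HasDerivAt (fun t : ℝ => -(γ * t)) (-γ) t := hlin.neg
    simpa [mul_comm, Function.comp_def] using (Real.hasDerivAt_exp (-(γ * t))).comp t h2
  have hsin : HasDerivAt (fun t => Real.sin (ν * t)) (ν * Real.cos (ν * t)) t := by
    simpa [mul_comm, Function.comp_def] using (Real.hasDerivAt_sin (ν * t)).comp t hlin'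
  have hcos : HasDerivAt (fun t => Real.cos (ν * t)) (-(ν * Real.sin (ν * t))) t := by
    simpa [mul_comm, Function.comp_def] using (Real.hasDerivAt_cos (ν * t)).comp t hlin'
  have hnum := (((hasDerivAt_const t (1:ℝ)).sub
      (he.mul (hcos.sub (hsin.const_mul (γ / ν))))).const_mul K).mul hen
  have hfull := (hasDerivAt_const t (-η)).sub (hnum.div hsin hs)
  have hmain : HasDerivAt (QL γ ν η K) _ t := hfull
  convert hmain using 1
  have hE : Real.exp (-(γ * t)) * Real.exp (γ * t) = 1 := by
    rw [← Real.exp_add]; simp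
  unfold phiMinus
  simp only [Pi.add_apply, Pi.sub_apply, Pi.mul_apply]
  have hP := Real.sin_sq_add_cos_sq (ν * t)
  field_simp
  linear_combination (K*ν^2) * hE + ((K*ν^2)*Real.exp (-(γ*t))*Real.exp (γ*t)) * hP

/-- Along the parametrization of the inverse left Poincaré half-return map, for
`t ∈ (π/ν, t̂⁻)` with `sin(νt) ≠ 0` and `Q(t) ≠ -η`, one has
`Q'(t)/y'(t) = ((y(t)+η)/(Q(t)+η)) e^{-2γ₃t}`. -/
theorem stmt_17 (γ ν η K th : ℝ) (hγ : 0 < γ) (hν : 0 < ν) (hK : K ≠ 0)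
    (hth : th ∈ Set.Ioo (π / ν) (2 * π / ν)) (hroot : phiPlus γ ν th = 0) :
    ∀ t ∈ Set.Ioo (π / ν) th, Real.sin (ν * t) ≠ 0 → QL γ ν η K t ≠ -η →
      deriv (QL γ ν η K) t / deriv (yL γ ν η K) t
        = ((yL γ ν η K t + η) / (QL γ ν η K t + η)) * Real.exp (-(2 * γ * t)) := by
  intro t ht hs hQ
  have hν' : ν ≠ 0 := ne_of_gt hν
  have hφp : phiPlus γ ν t ≠ 0 := by
    intro h
    exact hQ (by simp [QL, h])
  rw [(hasDerivAt_yL γ ν η K t hν' hs).deriv, (hasDerivAt_QL γ ν η K t hν' hs).deriv]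
  unfold yL QL
  have hE2 : Real.exp (-(2 * γ * t)) = Real.exp (-(γ * t)) * Real.exp (-(γ * t)) := by
    rw [← Real.exp_add]; ring_nf
  have hE : Real.exp (-(γ * t)) = (Real.exp (γ * t))⁻¹ := Real.exp_neg _
  rw [hE2, hE]
  field_simp
  rw [eq_div_iff (by
    have h1 : -(Real.sin (ν*t) * η * Real.exp (t*γ)) - K * phiPlus γ ν t + Real.sin (ν*t) * η * Real.exp (t*γ) = -(K * phiPlus γ ν t) := by ring
    rw [h1]
    exact neg_ne_zero.mpr (mul_ne_zero hK hφp))]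
  ring
end

section
/- Let α > 0 and let t̂(α) ∈ (π, 2π) be the unique solution of 1 − e^{α t}(cos t − α sin t) = 0 in (π, 2π). Then t̂(α) → 2π as α → 0⁺, and consequently y₁(α) := e^{α t̂(α)} sin t̂(α) satisfies y₁(α) < 0 for all small α > 0 and y₁(α) → 0 as α → 0⁺. -/
open Real

/-- Let `t̂(α) ∈ (π, 2π)` be the return time, i.e. the unique zero of
`ψ₊(t) = 1 - e^{αt}(cos t - α sin t)` in `(π, 2π)`. Then `t̂(α) → 2π` as `α → 0⁺`, and
`y₁(α) = e^{α t̂(α)} sin t̂(α)` is negative for all small `α > 0` and tends to `0`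
as `α → 0⁺`. -/
theorem stmt_18 (th : ℝ → ℝ)
    (hth : ∀ α : ℝ, 0 < α → th α ∈ Set.Ioo π (2 * π) ∧
      1 - Real.exp (α * th α) * (Real.cos (th α) - α * Real.sin (th α)) = 0) :
    Filter.Tendsto th (nhdsWithin 0 (Set.Ioi 0)) (nhds (2 * π)) ∧
    (∃ ε > 0, ∀ α : ℝ, 0 < α → α < ε → Real.exp (α * th α) * Real.sin (th α) < 0) ∧
    Filter.Tendsto (fun α => Real.exp (α * th α) * Real.sin (th α))
      (nhdsWithin 0 (Set.Ioi 0)) (nhds 0) := by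
  have hpi : (0:ℝ) < π := Real.pi_pos
  -- key identity: cos (th α) = α * sin (th α) + exp (-(α * th α))
  have key : ∀ α : ℝ, 0 < α →
      Real.cos (th α) = α * Real.sin (th α) + Real.exp (-(α * th α)) := by
    intro α hα
    obtain ⟨_, h2⟩ := hth α hα
    have hE : Real.exp (α * th α) ≠ 0 := (Real.exp_pos _).ne'
    have : Real.exp (α * th α) * (Real.cos (th α) - α * Real.sin (th α)) = 1 := by
      linarith
    have h3 : Real.cos (th α) - α * Real.sin (th α) = Real.exp (-(α * th α)) := by
      rw [Real.exp_neg]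
      field_simp at this ⊢
      linarith
    linarith
  -- squeeze for cos (th α)
  have hcos : Filter.Tendsto (fun α => Real.cos (th α)) (nhdsWithin 0 (Set.Ioi 0)) (nhds 1) := by
    have hlow : Filter.Tendsto (fun α : ℝ => -α + Real.exp (-(2 * π) * α))
        (nhdsWithin 0 (Set.Ioi 0)) (nhds 1) := by
      have hc : Continuous (fun α : ℝ => -α + Real.exp (-(2 * π) * α)) := by continuity
      have : Filter.Tendsto (fun α : ℝ => -α + Real.exp (-(2 * π) * α)) (nhds 0) (nhds 1) := by
        simpa using hc.tendsto 0
      exact this.mono_left nhdsWithin_le_nhds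
    have hup : Filter.Tendsto (fun α : ℝ => α + 1) (nhdsWithin 0 (Set.Ioi 0)) (nhds 1) := by
      have : Filter.Tendsto (fun α : ℝ => α + 1) (nhds 0) (nhds 1) := by
        have hc : Continuous (fun α : ℝ => α + 1) := by continuity
        simpa using hc.tendsto 0
      exact this.mono_left nhdsWithin_le_nhds
    refine tendsto_of_tendsto_of_tendsto_of_le_of_le' hlow hup ?_ ?_
    · filter_upwards [self_mem_nhdsWithin] with α (hα : 0 < α)
      obtain ⟨h1, h2⟩ := hth α hα
      rw [key α hα]
      have hs : -1 ≤ Real.sin (th α) := Real.neg_one_le_sin _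
      have hsin : α * Real.sin (th α) ≥ -α := by nlinarith
      have hexp : Real.exp (-(2 * π) * α) ≤ Real.exp (-(α * th α)) := by
        apply Real.exp_le_exp.2
        nlinarith [h1.2]
      linarith
    · filter_upwards [self_mem_nhdsWithin] with α (hα : 0 < α)
      obtain ⟨h1, h2⟩ := hth α hα
      rw [key α hα]
      have hs : Real.sin (th α) ≤ 1 := Real.sin_le_one _
      have hsin : α * Real.sin (th α) ≤ α := by nlinarith
      have hexp : Real.exp (-(α * th α)) ≤ 1 := by
        rw [Real.exp_le_one_iff]
        nlinarith [h1.1]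
      linarith
  -- main limit th α → 2π
  have hmain : Filter.Tendsto th (nhdsWithin 0 (Set.Ioi 0)) (nhds (2 * π)) := by
    rw [Metric.tendsto_nhds]
    intro ε hε
    set δ := min ε π with hδdef
    have hδ0 : 0 < δ := lt_min hε hpi
    have hδπ : δ ≤ π := min_le_right _ _
    have hcδ : Real.cos δ < 1 := by
      have := Real.strictAntiOn_cos (Set.mem_Icc.2 ⟨le_refl 0, hpi.le⟩)
        (Set.mem_Icc.2 ⟨hδ0.le, hδπ⟩) hδ0
      simpa using this
    filter_upwards [hcos.eventually (eventually_gt_nhds hcδ), self_mem_nhdsWithin]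
      with α hα (hαpos : 0 < α)
    obtain ⟨h1, _⟩ := hth α hαpos
    have hgt : 2 * π - δ < th α := by
      by_contra h
      push_neg at h
      have h2 : δ ≤ 2 * π - th α := by linarith
      have h3 : 2 * π - th α ∈ Set.Icc 0 π := by
        constructor <;> nlinarith [h1.1, h1.2]
      have := Real.strictAntiOn_cos.antitoneOn (Set.mem_Icc.2 ⟨hδ0.le, hδπ⟩) h3 h2
      rw [Real.cos_two_pi_sub] at this
      linarith
    rw [Real.dist_eq, abs_lt]
    constructor
    · linarith [min_le_left ε π]
    · linarith [h1.2, hε]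
  refine ⟨hmain, ?_, ?_⟩
  · refine ⟨1, one_pos, fun α hα _ => ?_⟩
    obtain ⟨h1, _⟩ := hth α hα
    have hs : Real.sin (th α) < 0 := by
      have := Real.sin_neg_of_neg_of_neg_pi_lt (x := th α - 2 * π)
        (by linarith [h1.2]) (by linarith [h1.1])
      rwa [Real.sin_sub_two_pi] at this
    exact mul_neg_of_pos_of_neg (Real.exp_pos _) hs
  · -- α * th α → 0
    have hαth : Filter.Tendsto (fun α => α * th α) (nhdsWithin 0 (Set.Ioi 0)) (nhds 0) := by
      have hlow : Filter.Tendsto (fun _ : ℝ => (0:ℝ)) (nhdsWithin 0 (Set.Ioi 0)) (nhds 0) :=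
        tendsto_const_nhds
      have hup : Filter.Tendsto (fun α : ℝ => α * (2 * π)) (nhdsWithin 0 (Set.Ioi 0)) (nhds 0) := by
        have : Filter.Tendsto (fun α : ℝ => α * (2 * π)) (nhds 0) (nhds 0) := by
          have hc : Continuous (fun α : ℝ => α * (2 * π)) := by continuity
          simpa using hc.tendsto 0
        exact this.mono_left nhdsWithin_le_nhds
      refine tendsto_of_tendsto_of_tendsto_of_le_of_le' hlow hup ?_ ?_
      · filter_upwards [self_mem_nhdsWithin] with α (hα : 0 < α)
        obtain ⟨h1, _⟩ := hth α hα
        nlinarith [h1.1]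
      · filter_upwards [self_mem_nhdsWithin] with α (hα : 0 < α)
        obtain ⟨h1, _⟩ := hth α hα
        nlinarith [h1.2]
    have hexp : Filter.Tendsto (fun α => Real.exp (α * th α)) (nhdsWithin 0 (Set.Ioi 0))
        (nhds 1) := by
      have := (Real.continuous_exp.tendsto 0).comp hαth
      simpa [Function.comp_def] using this
    have hsin : Filter.Tendsto (fun α => Real.sin (th α)) (nhdsWithin 0 (Set.Ioi 0))
        (nhds 0) := by
      have := (Real.continuous_sin.tendsto (2 * π)).comp hmain
      simpa [Real.sin_two_pi, Function.comp_def] using this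
    simpa using hexp.mul hsin
end
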